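/- In the triangular grid with a periodic configuration c (periodic of even period n in both coordinate directions): suppose the cell u is stable for c under rule 2 but not stable under rule 23, and let t be the first time-step at which u becomes active in the dynamics of rule 23. Then every cell of G[0,u] is active after t applications of rule 23, i.e. F_{23}^t(c)_w = 1 for every w in G[0,u]. -/

import Mathlib

/-- Neighbors in the triangular grid: cell `(i,j)` is adjacent to `(i-1,j)`,
`(i+1,j)`, and `(i,j-1)` if `i+j` is even, `(i,j+1)` if `i+j` is odd. -/
def triNbrs (p : ℤ × ℤ) : Finset (ℤ × ℤ) :=
  {(p.1 - 1, p.2), (p.1 + 1, p.2),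
   (p.1, if Even (p.1 + p.2) then p.2 - 1 else p.2 + 1)}

/-- Number of active neighbors of `p` in configuration `c`. -/
def triActCount (c : ℤ × ℤ → Bool) (p : ℤ × ℤ) : ℕ :=
  ((triNbrs p).filter (fun q => c q = true)).card

/-- The freezing totalistic rule on the triangular grid with activating set `I`. -/
def ruleT (I : Finset ℕ) (c : ℤ × ℤ → Bool) : ℤ × ℤ → Bool :=
  fun p => c p || decide (triActCount c p ∈ I)

/-- A cell `u` is stable for `c` under `F` if it is inactive and remains
inactive at all times. -/
def isStable (F : (ℤ × ℤ → Bool) → (ℤ × ℤ → Bool)) (c : ℤ × ℤ → Bool)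
    (u : ℤ × ℤ) : Prop :=
  c u = false ∧ ∀ t : ℕ, F^[t] c u = false

/-- A configuration is periodic of period `n` in both coordinate directions. -/
def Periodic (n : ℕ) (c : ℤ × ℤ → Bool) : Prop :=
  ∀ p : ℤ × ℤ, c (p.1 + n, p.2) = c p ∧ c (p.1, p.2 + n) = c p

/-- The graph `G[0]` on the inactive cells of `c`, with adjacency inherited
from the triangular grid. -/
def triG0 (c : ℤ × ℤ → Bool) : SimpleGraph (ℤ × ℤ) where
  Adj p q := p ≠ q ∧ c p = false ∧ c q = false ∧ (q ∈ triNbrs p ∨ p ∈ triNbrs q)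
  symm := ⟨fun p q h => ⟨h.1.symm, h.2.2.1, h.2.1, h.2.2.2.symm⟩⟩
  loopless := ⟨fun p h => h.1 rfl⟩

/- ### Auxiliary lemmas -/

lemma triNbrs_symm {p q : ℤ × ℤ} (h : q ∈ triNbrs p) : p ∈ triNbrs q := by
  obtain ⟨i, j⟩ := p
  obtain ⟨a, b⟩ := q
  simp only [triNbrs, Finset.mem_insert, Finset.mem_singleton, Prod.mk.injEq] at h ⊢
  split_ifs at h ⊢ <;> simp only [Int.even_iff] at * <;> omega

lemma card_triNbrs (p : ℤ × ℤ) : (triNbrs p).card = 3 := by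
  obtain ⟨i, j⟩ := p
  simp only [triNbrs]
  rw [Finset.card_insert_of_notMem, Finset.card_insert_of_notMem,
    Finset.card_singleton]
  · simp only [Finset.mem_singleton, Prod.mk.injEq]
    split_ifs <;> omega
  · simp only [Finset.mem_insert, Finset.mem_singleton, Prod.mk.injEq]
    split_ifs <;> omega

lemma triActCount_le_three (c : ℤ × ℤ → Bool) (p : ℤ × ℤ) :
    triActCount c p ≤ 3 := by
  rw [triActCount, ← card_triNbrs p]
  exact Finset.card_filter_le _ _

lemma ruleT_iter_succ (I : Finset ℕ) (c : ℤ × ℤ → Bool) (s : ℕ) (p : ℤ × ℤ) :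
    (ruleT I)^[s + 1] c p
      = ((ruleT I)^[s] c p || decide (triActCount ((ruleT I)^[s] c) p ∈ I)) := by
  rw [Function.iterate_succ_apply']
  rfl

lemma iter_mono (I : Finset ℕ) (c : ℤ × ℤ → Bool) (p : ℤ × ℤ) {r s : ℕ}
    (h : r ≤ s) (hr : (ruleT I)^[r] c p = true) : (ruleT I)^[s] c p = true := by
  induction s with
  | zero => exact (Nat.le_zero.mp h) ▸ hr
  | succ s ih =>
    rcases Nat.eq_or_lt_of_le h with rfl | h'
    · exact hr
    · rw [ruleT_iter_succ, ih (Nat.lt_succ_iff.mp h')]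
      rfl

lemma iter_false_of_le (I : Finset ℕ) (c : ℤ × ℤ → Bool) (p : ℤ × ℤ) {r s : ℕ}
    (h : r ≤ s) (hs : (ruleT I)^[s] c p = false) :
    (ruleT I)^[r] c p = false := by
  cases hr : (ruleT I)^[r] c p with
  | false => rfl
  | true => rw [iter_mono I c p h hr] at hs; exact hs

lemma exists_first (F : (ℤ × ℤ → Bool) → (ℤ × ℤ → Bool)) (c : ℤ × ℤ → Bool)
    (p : ℤ × ℤ) (h0 : c p = false) :
    ∀ s, F^[s] c p = true →
      ∃ r, r < s ∧ F^[r] c p = false ∧ F^[r + 1] c p = true := by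
  intro s
  induction s with
  | zero => intro h; rw [Function.iterate_zero_apply, h0] at h; exact absurd h (by simp)
  | succ s ih =>
    intro h
    cases hs : F^[s] c p with
    | true =>
      obtain ⟨r, hr, h1, h2⟩ := ih hs
      exact ⟨r, by omega, h1, h2⟩
    | false => exact ⟨s, by omega, hs, h⟩

/-- If two distinct neighbors of `x` are inactive, the active count is at most 1. -/
lemma two_inactive (c' : ℤ × ℤ → Bool) (x w y : ℤ × ℤ) (hw : w ∈ triNbrs x)
    (hy : y ∈ triNbrs x) (hne : w ≠ y) (hfw : c' w = false) (hfy : c' y = false) :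
    triActCount c' x ≤ 1 := by
  have hsub : (triNbrs x).filter (fun z => c' z = true) ⊆ (triNbrs x) \ {w, y} := by
    intro z hz
    rw [Finset.mem_filter] at hz
    rw [Finset.mem_sdiff]
    refine ⟨hz.1, ?_⟩
    simp only [Finset.mem_insert, Finset.mem_singleton]
    rintro (rfl | rfl)
    · rw [hfw] at hz; exact absurd hz.2 (by simp)
    · rw [hfy] at hz; exact absurd hz.2 (by simp)
  have h1 : ((triNbrs x) \ {w, y}).card = 1 := by
    rw [Finset.card_sdiff_of_subset]
    · rw [card_triNbrs, Finset.card_insert_of_notMem (by simp [hne]),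
        Finset.card_singleton]
    · intro z hz
      simp only [Finset.mem_insert, Finset.mem_singleton] at hz
      rcases hz with rfl | rfl <;> assumption
  calc triActCount c' x ≤ ((triNbrs x) \ {w, y}).card := Finset.card_le_card hsub
    _ = 1 := h1

/-- Rule 2 activity is dominated by rule 23 activity. -/
lemma a_le_b (c : ℤ × ℤ → Bool) : ∀ (s : ℕ) (p : ℤ × ℤ),
    (ruleT {2})^[s] c p = true → (ruleT {2, 3})^[s] c p = true := by
  intro s
  induction s with
  | zero => exact fun p h => h
  | succ s ih =>
    intro p h
    rw [ruleT_iter_succ] at h ⊢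
    cases hsp : (ruleT {2})^[s] c p with
    | true => rw [ih p hsp]; rfl
    | false =>
      rw [hsp] at h
      have h2 : triActCount ((ruleT {2})^[s] c) p = 2 := by simpa using h
      have hsub : ((triNbrs p).filter (fun q => (ruleT {2})^[s] c q = true)) ⊆
        ((triNbrs p).filter (fun q => (ruleT {2, 3})^[s] c q = true)) := by
        intro z hz
        rw [Finset.mem_filter] at hz ⊢
        exact ⟨hz.1, ih z hz.2⟩
      have hle : 2 ≤ triActCount ((ruleT {2, 3})^[s] c) p := by
        have hcc := Finset.card_le_card hsub
        unfold triActCount at h2 ⊢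
        omega
      have hle3 := triActCount_le_three ((ruleT {2, 3})^[s] c) p
      have hmem : triActCount ((ruleT {2, 3})^[s] c) p ∈ ({2, 3} : Finset ℕ) := by
        simp only [Finset.mem_insert, Finset.mem_singleton]
        omega
      simp [hmem]

/-- Discrepancy invariant: a cell active under rule 23 but inactive under rule 2
has all its neighbors active under rule 2. -/
lemma discrepancy (c : ℤ × ℤ → Bool) : ∀ (s : ℕ) (p : ℤ × ℤ),
    (ruleT {2, 3})^[s] c p = true → (ruleT {2})^[s] c p = false →
    ∀ q ∈ triNbrs p, (ruleT {2})^[s] c q = true := by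
  intro s
  induction s with
  | zero => intro p hb ha; rw [Function.iterate_zero_apply] at hb ha; rw [hb] at ha; exact absurd ha (by simp)
  | succ s ih =>
    intro p hb ha q hq
    have haps : (ruleT {2})^[s] c p = false := iter_false_of_le _ c p (Nat.le_succ s) ha
    have hA2 : triActCount ((ruleT {2})^[s] c) p ≠ 2 := by
      intro h
      rw [ruleT_iter_succ, haps] at ha
      simp [h] at ha
    cases hbs : (ruleT {2, 3})^[s] c p with
    | true =>
      exact iter_mono _ c q (Nat.le_succ s) (ih p hbs haps q hq)
    | false =>
      rw [ruleT_iter_succ, hbs] at hb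
      simp only [Bool.false_or, decide_eq_true_eq, Finset.mem_insert,
        Finset.mem_singleton] at hb
      have hqa : ∀ z ∈ triNbrs p,
          ((ruleT {2, 3})^[s] c z = true ↔ (ruleT {2})^[s] c z = true) := by
        intro z hz
        constructor
        · intro hbz
          cases haz : (ruleT {2})^[s] c z with
          | true => rfl
          | false =>
            have := ih z hbz haz p (triNbrs_symm hz)
            rw [this] at haps
            exact absurd haps (by simp)
        · exact a_le_b c s z
      have hcnt : triActCount ((ruleT {2, 3})^[s] c) p
          = triActCount ((ruleT {2})^[s] c) p := by
        unfold triActCount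
        congr 1
        exact Finset.filter_congr hqa
      have hA3 : triActCount ((ruleT {2})^[s] c) p = 3 := by omega
      have hfull : (triNbrs p).filter (fun z => (ruleT {2})^[s] c z = true)
          = triNbrs p :=
        Finset.eq_of_subset_of_card_le (Finset.filter_subset _ _)
          (by rw [card_triNbrs]; rw [triActCount] at hA3; omega)
      rw [← hfull] at hq
      exact iter_mono _ c q (Nat.le_succ s) (Finset.mem_filter.mp hq).2

/-- Descending activation chain: along a path ending at the rule-2-stable cell `u`,
if the start cell activates under rule 2 at time `s+1` while some neighbor off the
path is still inactive at time `s`, we get a contradiction. -/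
lemma chainV (c : ℤ × ℤ → Bool) :
    ∀ (x u : ℤ × ℤ) (q : (triG0 c).Walk x u), q.IsPath →
      (∀ s, (ruleT {2})^[s] c u = false) →
      ∀ s w, (ruleT {2})^[s] c x = false → (ruleT {2})^[s + 1] c x = true →
        w ∈ triNbrs x → (ruleT {2})^[s] c w = false → w ∉ q.support → False := by
  intro x u q
  induction q with
  | nil =>
    intro _ hu s w _ hx1 _ _ _
    rw [hu (s + 1)] at hx1
    exact absurd hx1 (by simp)
  | @cons x y u hadj q ih =>
    intro hp hu s w hx hx1 hwnb hwf hwns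
    obtain ⟨hqp, hxs⟩ := (SimpleGraph.Walk.cons_isPath_iff _ _).mp hp
    obtain ⟨hne, hcx, hcy, hnb⟩ := id hadj
    have hyx : y ∈ triNbrs x := by
      rcases hnb with h | h
      · exact h
      · exact triNbrs_symm h
    have hxy : x ∈ triNbrs y := triNbrs_symm hyx
    rw [SimpleGraph.Walk.support_cons, List.mem_cons] at hwns
    push_neg at hwns
    have hwy : w ≠ y := by
      intro h
      exact hwns.2 (h ▸ q.start_mem_support)
    -- x activates at s+1, so its active count at s is 2
    have h2 : triActCount ((ruleT {2})^[s] c) x = 2 := by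
      rw [ruleT_iter_succ, hx] at hx1
      simpa using hx1
    -- y must be active at time s (else two inactive neighbors w, y)
    have hay : (ruleT {2})^[s] c y = true := by
      cases hay : (ruleT {2})^[s] c y with
      | true => rfl
      | false =>
        have := two_inactive ((ruleT {2})^[s] c) x w y hwnb hyx hwy hwf hay
        omega
    -- first activation time of y
    obtain ⟨r, hrs, hy1, hy2⟩ := exists_first (ruleT {2}) c y hcy s hay
    exact ih hqp hu r x hy1 hy2 hxy
      (iter_false_of_le _ c x (Nat.le_of_lt hrs) hx) hxs

/-- Every cell on a path from `u` (the rule-2-stable cell whose neighbors are all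
rule-2-active at time `τ`) is rule-2-active at time `τ`, except `u` itself. -/
lemma chainN (c : ℤ × ℤ → Bool) (τ : ℕ) :
    ∀ (x u : ℤ × ℤ) (q : (triG0 c).Walk x u), q.IsPath →
      (∀ s, (ruleT {2})^[s] c u = false) →
      (∀ z ∈ triNbrs u, (ruleT {2})^[τ] c z = true) →
      x = u ∨ (ruleT {2})^[τ] c x = true := by
  intro x u q
  induction q with
  | nil => intro _ _ _; left; rfl
  | @cons x y u hadj q ih =>
    intro hp hu hiso
    right
    obtain ⟨hqp, hxs⟩ := (SimpleGraph.Walk.cons_isPath_iff _ _).mp hp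
    obtain ⟨hne, hcx, hcy, hnb⟩ := hadj
    have hyx : y ∈ triNbrs x := by
      rcases hnb with h | h
      · exact h
      · exact triNbrs_symm h
    have hxy : x ∈ triNbrs y := triNbrs_symm hyx
    rcases ih hqp hu hiso with rfl | hay
    · exact hiso x hxy
    · cases hax : (ruleT {2})^[τ] c x with
      | true => rfl
      | false =>
        obtain ⟨r, hrτ, hy1, hy2⟩ := exists_first (ruleT {2}) c y hcy τ hay
        exact absurd (chainV c y u q hqp hu r x hy1 hy2 hxy
          (iter_false_of_le _ c x (Nat.le_of_lt hrτ) hax) hxs) (by simp)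

/-- triangular grid, `c` periodic of even period `n`. If `u` is
stable under rule 2 but not under rule 23, and `t` is the first time-step at
which `u` becomes active under rule 23, then every cell of the connected
component `G[0,u]` of inactive cells containing `u` is active after `t`
applications of rule 23. -/
theorem stmt5 (n : ℕ) (hn : 0 < n) (hne : Even n) (c : ℤ × ℤ → Bool)
    (hper : Periodic n c) (u : ℤ × ℤ)
    (hstab2 : isStable (ruleT {2}) c u)
    (hnstab23 : ¬ isStable (ruleT {2, 3}) c u)
    (t : ℕ) (ht : (ruleT {2, 3})^[t] c u = true)
    (htmin : ∀ s < t, (ruleT {2, 3})^[s] c u = false) :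
    ∀ w, (triG0 c).Reachable u w → (ruleT {2, 3})^[t] c w = true := by
  obtain ⟨hc0, hstab⟩ := hstab2
  -- t ≥ 1
  obtain ⟨τ, rfl⟩ : ∃ τ, t = τ + 1 := by
    cases t with
    | zero => rw [Function.iterate_zero_apply, hc0] at ht; exact absurd ht (by simp)
    | succ τ => exact ⟨τ, rfl⟩
  have hBu : (ruleT {2, 3})^[τ] c u = false := htmin τ (Nat.lt_succ_self τ)
  have ht' := ht
  rw [ruleT_iter_succ, hBu] at ht'
  simp only [Bool.false_or, decide_eq_true_eq, Finset.mem_insert,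
    Finset.mem_singleton] at ht'
  have hAu : (ruleT {2})^[τ] c u = false := hstab τ
  have hA2 : triActCount ((ruleT {2})^[τ] c) u ≠ 2 := by
    intro h
    have hAu1 := hstab (τ + 1)
    rw [ruleT_iter_succ, hAu] at hAu1
    simp [h] at hAu1
  -- at u, rule-23 and rule-2 activity of neighbors coincide at time τ
  have hqa : ∀ z ∈ triNbrs u,
      ((ruleT {2, 3})^[τ] c z = true ↔ (ruleT {2})^[τ] c z = true) := by
    intro z hz
    constructor
    · intro hbz
      cases haz : (ruleT {2})^[τ] c z with
      | true => rfl
      | false =>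
        have := discrepancy c τ z hbz haz u (triNbrs_symm hz)
        rw [this] at hAu
        exact absurd hAu (by simp)
    · exact a_le_b c τ z
  have hcnt : triActCount ((ruleT {2, 3})^[τ] c) u
      = triActCount ((ruleT {2})^[τ] c) u := by
    unfold triActCount
    congr 1
    exact Finset.filter_congr hqa
  have hA3 : triActCount ((ruleT {2})^[τ] c) u = 3 := by omega
  -- all neighbors of u are rule-2-active at time τ
  have hiso : ∀ z ∈ triNbrs u, (ruleT {2})^[τ] c z = true := by
    have hfull : (triNbrs u).filter (fun z => (ruleT {2})^[τ] c z = true)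
        = triNbrs u :=
      Finset.eq_of_subset_of_card_le (Finset.filter_subset _ _)
        (by rw [card_triNbrs]; rw [triActCount] at hA3; omega)
    intro z hz
    rw [← hfull] at hz
    exact (Finset.mem_filter.mp hz).2
  intro w hreach
  obtain ⟨wk⟩ := hreach
  have hqp : wk.reverse.bypass.IsPath := SimpleGraph.Walk.bypass_isPath _
  rcases chainN c τ w u wk.reverse.bypass hqp hstab hiso with rfl | hA
  · exact ht
  · exact iter_mono _ c w (Nat.le_succ τ) (a_le_b c τ w hA)
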